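/- For all natural numbers n, (1/π) · ∫₀¹ u^{n - 1/2} · ₂F₁(1/2, 1/2; 1; 1-u) du = C(2n, n)² / 4^{2n}, where ₂F₁(1/2,1/2;1;z) = ∑_{k=0}^{∞} ((1/2)_k)²/(k!)² · z^k. -/

import Mathlib

open Real

/-- The Gauss hypergeometric function ₂F₁(1/2, 1/2; 1; z) as a series. -/
noncomputable def twoF1half (z : ℝ) : ℝ :=
  ∑' k : ℕ, (Real.Gamma (1 / 2 + k) / Real.Gamma (1 / 2)) ^ 2
    / (Nat.factorial k : ℝ) ^ 2 * z ^ k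

open Filter MeasureTheory intervalIntegral Finset

noncomputable section

/-- central binomial / 4^k -/
def wb (k : ℕ) : ℝ := (Nat.centralBinom k : ℝ) / 4 ^ k

/-- ascending factorial -/
def ph (x : ℝ) : ℕ → ℝ
  | 0 => 1
  | k+1 => ph x k * (x + k)

lemma ph_zero (x : ℝ) : ph x 0 = 1 := rfl
lemma ph_succ (x : ℝ) (k : ℕ) : ph x (k+1) = ph x k * (x + k) := rfl

lemma ph_pos {x : ℝ} (hx : 0 < x) (k : ℕ) : 0 < ph x k := by
  induction k with
  | zero => exact one_pos
  | succ k ih => exact mul_pos ih (by positivity)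

lemma ph_succ_left (x : ℝ) (k : ℕ) : ph x (k+1) = x * ph (x+1) k := by
  induction k with
  | zero => simp [ph_zero, ph_succ]
  | succ k ih =>
      rw [ph_succ, ih, ph_succ]
      push_cast
      ring

lemma ph_mono {x y : ℝ} (hx : 0 < x) (hxy : x ≤ y) (k : ℕ) : ph x k ≤ ph y k := by
  induction k with
  | zero => exact le_rfl
  | succ k ih =>
      rw [ph_succ, ph_succ]
      have h1 : (0:ℝ) ≤ x + k := by positivity
      have := ph_pos hx k
      nlinarith

lemma wb_zero : wb 0 = 1 := by simp [wb, Nat.centralBinom]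

lemma wb_pos (k : ℕ) : 0 < wb k := by
  have h := Nat.centralBinom_pos k
  have h' : (0:ℝ) < Nat.centralBinom k := by exact_mod_cast h
  have h4 : (0:ℝ) < 4 ^ k := by positivity
  exact div_pos h' h4

lemma wb_succ (k : ℕ) : wb (k+1) = wb k * ((2*k+1)/(2*k+2)) := by
  have h := Nat.succ_mul_centralBinom_succ k
  have h' : ((k:ℝ)+1) * (Nat.centralBinom (k+1) : ℝ) = 2 * (2*k+1) * Nat.centralBinom k := by
    exact_mod_cast h
  have hk : ((k:ℝ)+1) ≠ 0 := by positivity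
  rw [wb, wb]
  rw [div_mul_div_comm, div_eq_div_iff (by positivity) (by positivity)]
  push_cast
  linear_combination (2*(4:ℝ)^k) * h'

lemma wb_le_one (k : ℕ) : wb k ≤ 1 := by
  induction k with
  | zero => simp [wb_zero]
  | succ k ih =>
      rw [wb_succ]
      have h1 : (2*(k:ℝ)+1)/(2*k+2) ≤ 1 := by
        rw [div_le_one (by positivity)]; linarith
      have := wb_pos k
      nlinarith

lemma wb_sq (k : ℕ) : wb k ^ 2 * (2*k+1) ≤ 1 := by
  induction k with
  | zero => simp [wb_zero]
  | succ k ih =>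
      rw [wb_succ]
      have h2 : (0:ℝ) < 2*k+2 := by positivity
      have h3 := wb_pos k
      have key : (wb k * ((2*k+1)/(2*k+2)))^2 * (2*(k+1)+1)
          = wb k ^2 * (2*k+1) * ((2*k+1)*(2*k+3)/(2*k+2)^2) := by
        field_simp; ring
      push_cast
      rw [key]
      clear key
      have h4 : (2*(k:ℝ)+1)*(2*k+3)/(2*k+2)^2 ≤ 1 := by
        rw [div_le_one (by positivity)]; nlinarith
      have h5 : (0:ℝ) ≤ wb k ^2 * (2*k+1) := by positivity
      push_cast
      nlinarith

lemma ph_half (k : ℕ) : ph (1/2) k = wb k * Nat.factorial k := by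
  induction k with
  | zero => simp [ph_zero, wb_zero]
  | succ k ih =>
      rw [ph_succ, ih, wb_succ, Nat.factorial_succ]
      have : (2*(k:ℝ)+2) ≠ 0 := by positivity
      push_cast
      field_simp
      ring

lemma gamma_half_ratio (k : ℕ) : Real.Gamma (1/2 + k) = ph (1/2) k * Real.Gamma (1/2) := by
  induction k with
  | zero => simp [ph_zero]
  | succ k ih =>
      have h0 : (1/2 : ℝ) + k ≠ 0 := ne_of_gt (by positivity)
      have : (1/2:ℝ) + (k+1) = ((1/2:ℝ)+k) + 1 := by ring
      push_cast
      rw [this, Real.Gamma_add_one h0]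
      push_cast at ih
      rw [ih, ph_succ]
      ring

/-- the summand of ₂F₁(1/2,1/2;c;1) -/
def g (c : ℝ) (k : ℕ) : ℝ := wb k ^ 2 * Nat.factorial k / ph c k

lemma g_nonneg {c : ℝ} (hc : 0 < c) (k : ℕ) : 0 ≤ g c k := by
  have h1 := wb_pos k
  have h2 := ph_pos hc k
  have h3 := (Nat.factorial_pos k)
  have h3' : (0:ℝ) < Nat.factorial k := by exact_mod_cast h3
  exact div_nonneg (by positivity) h2.le

lemma g_zero (c : ℝ) : g c 0 = 1 := by simp [g, ph_zero, wb_zero]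

lemma ph_three_half (k : ℕ) : ph (3/2) k = wb k * Nat.factorial k * (2*k+1) := by
  induction k with
  | zero => simp [ph_zero, wb_zero]
  | succ k ih =>
      rw [ph_succ, ih, wb_succ, Nat.factorial_succ]
      have h3 : (2*(k:ℝ)+2) ≠ 0 := by positivity
      push_cast
      field_simp
      ring

lemma g_three_half (k : ℕ) : g (3/2) k = wb k / (2*k+1) := by
  have h1 : ph (3/2:ℝ) k ≠ 0 := (ph_pos (by norm_num) k).ne'
  have h2 : (2*(k:ℝ)+1) ≠ 0 := by positivity
  have h3 : (Nat.factorial k : ℝ) ≠ 0 := by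
    exact_mod_cast (Nat.factorial_pos k).ne'
  have h4 : wb k * (Nat.factorial k : ℝ) * (2*k+1) ≠ 0 := by
    have := wb_pos k
    have hf : (0:ℝ) < (Nat.factorial k:ℝ) := by exact_mod_cast Nat.factorial_pos k
    positivity
  rw [g, ph_three_half, div_eq_div_iff h4 h2]
  ring

lemma g_mono {c : ℝ} (hc : 3/2 ≤ c) (k : ℕ) : g c k ≤ g (3/2) k := by
  have h2 := ph_pos (show (0:ℝ) < 3/2 by norm_num) k
  have h3 := ph_pos (show (0:ℝ) < c by linarith) k
  have h4 : (0:ℝ) ≤ wb k ^2 * (Nat.factorial k:ℝ) := by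
    have := wb_pos k; positivity
  exact (div_le_div_iff_of_pos_left (lt_of_le_of_ne h4 (by
    have hw := wb_pos k
    have hf : (0:ℝ) < (Nat.factorial k:ℝ) := by exact_mod_cast Nat.factorial_pos k
    positivity)) h3 h2).2 (ph_mono (by norm_num) hc k)

/-- summable bound -/
lemma summable_bound : Summable (fun k : ℕ => (((k:ℝ)+1) ^ (3/2 : ℝ))⁻¹) := by
  have h := Real.summable_nat_rpow_inv.2 (show (1:ℝ) < 3/2 by norm_num)
  have h2 := (summable_nat_add_iff 1).2 h
  refine h2.congr ?_
  intro k
  push_cast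
  norm_num

lemma g_le_bound {c : ℝ} (hc : 3/2 ≤ c) (k : ℕ) : g c k ≤ (((k:ℝ)+1) ^ (3/2 : ℝ))⁻¹ := by
  refine (g_mono hc k).trans ?_
  rw [g_three_half]
  have hk1 : (0:ℝ) < (k:ℝ)+1 := by positivity
  have hk2 : (0:ℝ) < 2*(k:ℝ)+1 := by positivity
  have hw := wb_pos k
  have hsq := wb_sq k
  have hA : (0:ℝ) ≤ wb k / (2*k+1) := by positivity
  have hB : (0:ℝ) < (((k:ℝ)+1) ^ (3/2 : ℝ))⁻¹ := by
    have := Real.rpow_pos_of_pos hk1 (3/2:ℝ); positivity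
  have hBsq : ((((k:ℝ)+1) ^ (3/2 : ℝ))⁻¹)^2 = (((k:ℝ)+1)^3)⁻¹ := by
    rw [inv_pow, ← Real.rpow_natCast (((k:ℝ)+1) ^ (3/2:ℝ)) 2,
      ← Real.rpow_mul hk1.le, ← Real.rpow_natCast ((k:ℝ)+1) 3]
    norm_num
  have hsq2 : (wb k / (2*k+1))^2 ≤ ((((k:ℝ)+1) ^ (3/2 : ℝ))⁻¹)^2 := by
    rw [hBsq, div_pow, inv_eq_one_div, div_le_div_iff₀ (by positivity) (by positivity)]
    have hcube : ((k:ℝ)+1)^3 ≤ (2*(k:ℝ)+1)^3 :=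
      pow_le_pow_left₀ hk1.le (by have : (0:ℝ) ≤ (k:ℝ) := k.cast_nonneg; linarith) 3
    nlinarith [mul_le_mul_of_nonneg_left hsq (le_of_lt (pow_pos hk1 3)),
      mul_le_mul_of_nonneg_left hcube (sq_nonneg (2*(k:ℝ)+1)), sq_nonneg (wb k)]
  calc wb k / (2*k+1) = Real.sqrt ((wb k / (2*k+1))^2) := (Real.sqrt_sq hA).symm
    _ ≤ Real.sqrt (((((k:ℝ)+1) ^ (3/2 : ℝ))⁻¹)^2) := Real.sqrt_le_sqrt hsq2
    _ = (((k:ℝ)+1) ^ (3/2 : ℝ))⁻¹ := Real.sqrt_sq hB.le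

lemma summable_g {c : ℝ} (hc : 3/2 ≤ c) : Summable (g c) :=
  Summable.of_nonneg_of_le (g_nonneg (by linarith) ) (g_le_bound hc) summable_bound

lemma hasSum_telescope {v : ℕ → ℝ} (hv : Filter.Tendsto v atTop (nhds 0))
    (hs : Summable (fun k => v k - v (k+1))) :
    HasSum (fun k => v k - v (k+1)) (v 0) := by
  rw [hs.hasSum_iff_tendsto_nat]
  have h : ∀ n, ∑ i ∈ Finset.range n, (v i - v (i+1)) = v 0 - v n :=
    fun n => Finset.sum_range_sub' v n
  simp_rw [h]
  simpa using tendsto_const_nhds.sub hv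

lemma ph_five_half (k : ℕ) : ph (5/2) k = (4/3) * wb (k+2) * Nat.factorial (k+2) := by
  induction k with
  | zero =>
      have : Nat.centralBinom 2 = 6 := by decide
      norm_num [ph_zero, wb, this]
  | succ k ih =>
      rw [ph_succ, ih, show k+1+2 = (k+2)+1 by omega, wb_succ (k+2), Nat.factorial_succ (k+2)]
      have h3 : (2*((k:ℝ)+2)+2) ≠ 0 := by positivity
      push_cast
      field_simp
      ring

/-- the telescoping sequence for the contiguous relation -/
def tv (c : ℝ) (k : ℕ) : ℝ := -(k * wb k^2 * Nat.factorial k * (c+k)) / ph (c+1) k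

lemma tv_zero (c : ℝ) : tv c 0 = 0 := by simp [tv, ph_zero]

lemma tv_bound {c : ℝ} (hc : 3/2 ≤ c) (k : ℕ) : |tv c k| ≤ wb k := by
  have hc1 : (0:ℝ) < c + 1 := by linarith
  cases k with
  | zero => rw [tv_zero]; simpa using (wb_pos 0).le
  | succ m =>
      have hP := ph_pos hc1 m
      have hP5 := ph_pos (show (0:ℝ) < 5/2 by norm_num) m
      have hmono : ph (5/2) m ≤ ph (c+1) m := ph_mono (by norm_num) (by linarith) m
      have hw1 := wb_pos (m+1)
      have hw2 := wb_pos (m+2)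
      have hf : (0:ℝ) < Nat.factorial (m+1) := by exact_mod_cast Nat.factorial_pos (m+1)
      have hv : tv c (m+1) = -(((m:ℝ)+1) * wb (m+1)^2 * Nat.factorial (m+1)) / ph (c+1) m := by
        rw [tv, ph_succ]
        have hne : ((c:ℝ)+1+m) ≠ 0 := by positivity
        push_cast
        field_simp
        ring
      rw [hv, abs_div, abs_neg]
      rw [abs_of_nonneg (by positivity), abs_of_pos hP]
      rw [div_le_iff₀ hP]
      have step1 : ((m:ℝ)+1) * wb (m+1)^2 * Nat.factorial (m+1)
          ≤ wb (m+1) * ph (5/2) m := by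
        rw [ph_five_half]
        have e1 : wb (m+2) = wb (m+1) * ((2*((m:ℝ)+1)+1)/(2*((m:ℝ)+1)+2)) := by
          have h := wb_succ (m+1); push_cast at h ⊢; exact h
        have e2 : (Nat.factorial (m+2) : ℝ) = ((m:ℝ)+2) * Nat.factorial (m+1) := by
          rw [show m+2 = (m+1)+1 by omega, Nat.factorial_succ]; push_cast; ring
        rw [e1, e2]
        have h4 : (0:ℝ) < 2*((m:ℝ)+1)+2 := by positivity
        have hre : wb (m+1) * ((4/3) * (wb (m+1) * ((2*((m:ℝ)+1)+1)/(2*((m:ℝ)+1)+2))) * (((m:ℝ)+2) * (Nat.factorial (m+1):ℝ)))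
            = (wb (m+1)^2 * (Nat.factorial (m+1):ℝ)) * ((4/3)*(2*((m:ℝ)+1)+1)*((m:ℝ)+2)) / (2*((m:ℝ)+1)+2) := by
          field_simp
        rw [hre, le_div_iff₀ h4]
        have key : ((m:ℝ)+1)*(2*((m:ℝ)+1)+2) ≤ (4/3)*(2*((m:ℝ)+1)+1)*((m:ℝ)+2) := by
          nlinarith [m.cast_nonneg (α := ℝ)]
        have hnn : (0:ℝ) ≤ wb (m+1)^2 * (Nat.factorial (m+1):ℝ) := by positivity
        nlinarith [mul_le_mul_of_nonneg_left key hnn]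
      exact step1.trans (mul_le_mul_of_nonneg_left hmono hw1.le)

lemma wb_tendsto_zero : Filter.Tendsto wb atTop (nhds 0) := by
  have hb : ∀ k : ℕ, |wb k| ≤ Real.sqrt (1/(2*(k:ℝ)+1)) := by
    intro k
    have hw := wb_pos k
    have h2 : (0:ℝ) < 2*(k:ℝ)+1 := by positivity
    rw [abs_of_pos hw]
    have : wb k = Real.sqrt (wb k ^ 2) := (Real.sqrt_sq hw.le).symm
    rw [this]
    apply Real.sqrt_le_sqrt
    rw [pow_two] at *
    have := wb_sq k
    rw [le_div_iff₀ h2]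
    nlinarith [wb_sq k]
  apply squeeze_zero_norm hb
  have h1 : Filter.Tendsto (fun k : ℕ => 1/(2*(k:ℝ)+1)) atTop (nhds 0) := by
    apply Filter.Tendsto.div_atTop (tendsto_const_nhds)
    apply Filter.Tendsto.atTop_add _ tendsto_const_nhds
    exact tendsto_natCast_atTop_atTop.const_mul_atTop two_pos
  have h2 := (Real.continuous_sqrt.tendsto' 0 0 (by simp)).comp h1
  exact h2.congr (fun k => rfl)

lemma tv_tendsto_zero {c : ℝ} (hc : 3/2 ≤ c) :
    Filter.Tendsto (tv c) atTop (nhds 0) := by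
  apply squeeze_zero_norm (fun k => tv_bound hc k) wb_tendsto_zero

/-- the contiguous relation, pointwise telescoped -/
lemma contiguous_pointwise {c : ℝ} (hc : 3/2 ≤ c) (k : ℕ) :
    c*(1-c) * g c k + (c-1/2)^2 * g (c+1) k = tv c k - tv c (k+1) := by
  have hc0 : (0:ℝ) < c := by linarith
  have hck : (0:ℝ) < c + k := by positivity
  have hc1k : (0:ℝ) < c + 1 + k := by positivity
  have hP := ph_pos (show (0:ℝ) < c+1 by linarith) k
  have hQ := ph_pos hc0 k
  have hQP : ph c k * (c+k) = c * ph (c+1) k := by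
    rw [← ph_succ, ph_succ_left]
  have hQe : ph c k = c * ph (c+1) k / (c+k) := by
    rw [← hQP]; field_simp
  have hw := wb_pos k
  have hf : (0:ℝ) < Nat.factorial k := by exact_mod_cast Nat.factorial_pos k
  rw [g, g, tv, tv, hQe, ph_succ (c+1) k, wb_succ, Nat.factorial_succ]
  push_cast
  field_simp
  ring

lemma G_step {c : ℝ} (hc : 3/2 ≤ c) :
    ∑' k, g c k = (c-1/2)^2/(c*(c-1)) * ∑' k, g (c+1) k := by
  have hs1 := summable_g hc
  have hs2 := summable_g (show (3:ℝ)/2 ≤ c+1 by linarith)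
  have hsum : HasSum (fun k => c*(1-c) * g c k + (c-1/2)^2 * g (c+1) k)
      (c*(1-c) * ∑' k, g c k + (c-1/2)^2 * ∑' k, g (c+1) k) :=
    ((hs1.hasSum.mul_left _).add (hs2.hasSum.mul_left _))
  have hsum2 : HasSum (fun k => tv c k - tv c (k+1)) (tv c 0) := by
    apply hasSum_telescope (tv_tendsto_zero hc)
    exact hsum.summable.congr (fun k => contiguous_pointwise hc k)
  have heq : c*(1-c) * ∑' k, g c k + (c-1/2)^2 * ∑' k, g (c+1) k = 0 := by
    have := hsum.tsum_eq
    have h2 := hsum2.tsum_eq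
    rw [tv_zero] at h2
    have h3 : (fun k => c*(1-c) * g c k + (c-1/2)^2 * g (c+1) k)
        = (fun k => tv c k - tv c (k+1)) := funext (contiguous_pointwise hc)
    rw [← this, h3, h2]
  have hcc : c*(c-1) ≠ 0 := by
    have : (0:ℝ) < c - 1 := by linarith
    positivity
  rw [div_mul_eq_mul_div, eq_div_iff hcc]
  linear_combination -heq

lemma ph_four (k : ℕ) : ph 4 k = (Nat.factorial (k+3) : ℝ) / 6 := by
  induction k with
  | zero => norm_num [ph_zero, Nat.factorial]
  | succ k ih =>
      rw [ph_succ, ih, show k+1+3 = (k+3)+1 by omega, Nat.factorial_succ (k+3)]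
      push_cast
      field_simp
      ring

lemma summable_aux2 : Summable (fun k : ℕ => 1/((k:ℝ)+1)^2) := by
  have h := Real.summable_one_div_nat_pow.2 (show 1 < 2 by norm_num)
  have h2 := (summable_nat_add_iff 1).2 h
  refine h2.congr ?_
  intro k
  push_cast
  norm_num

lemma one_le_G {c : ℝ} (hc : 3/2 ≤ c) : 1 ≤ ∑' k, g c k := by
  have := Summable.le_tsum (summable_g hc) 0 (fun k _ => g_nonneg (by linarith) k)
  rwa [g_zero] at this

lemma G_le {x : ℝ} (hx : 3 ≤ x) : ∑' k, g x k ≤ 1 + 3/x := by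
  have hx0 : (0:ℝ) < x := by linarith
  have hsg := summable_g (show (3:ℝ)/2 ≤ x by linarith)
  rw [Summable.tsum_eq_zero_add hsg, g_zero]
  have hb : ∀ k : ℕ, g x (k+1) ≤ 6/(x*((k:ℝ)+2)*((k:ℝ)+3)) := by
    intro k
    have h1 : ph x (k+1) = x * ph (x+1) k := ph_succ_left x k
    have h2 : ph 4 k ≤ ph (x+1) k := ph_mono (by norm_num) (by linarith) k
    have h4 := ph_pos (show (0:ℝ) < 4 by norm_num) k
    have h5 := ph_pos (show (0:ℝ) < x+1 by linarith) k
    have hw1 := wb_pos (k+1)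
    have hwle := wb_le_one (k+1)
    have hf1 : (0:ℝ) < (Nat.factorial (k+1) : ℝ) := by exact_mod_cast Nat.factorial_pos (k+1)
    rw [g, h1]
    have key : wb (k+1)^2 * (Nat.factorial (k+1):ℝ) ≤ Nat.factorial (k+1) := by
      have hsq : wb (k+1)^2 ≤ 1 := by nlinarith
      nlinarith
    calc wb (k+1)^2 * (Nat.factorial (k+1):ℝ) / (x * ph (x+1) k)
        ≤ (Nat.factorial (k+1):ℝ) / (x * ph 4 k) := by
          exact div_le_div₀ hf1.le key (by positivity)
            (mul_le_mul_of_nonneg_left h2 hx0.le)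
      _ = 6/(x*((k:ℝ)+2)*((k:ℝ)+3)) := by
          rw [ph_four]
          have e : (Nat.factorial (k+3) : ℝ) = ((k:ℝ)+3)*((k:ℝ)+2)*(Nat.factorial (k+1):ℝ) := by
            rw [show k+3 = (k+2)+1 by omega, Nat.factorial_succ, show k+2 = (k+1)+1 by omega,
              Nat.factorial_succ]
            push_cast; ring
          rw [e]
          field_simp
  have hsb : Summable (fun k : ℕ => 6/(x*((k:ℝ)+2)*((k:ℝ)+3))) := by
    apply Summable.of_nonneg_of_le (fun k => by positivity) _ (summable_aux2.mul_left 2)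
    intro k
    rw [div_le_iff₀ (by positivity)]
    have hk0 : (0:ℝ) ≤ (k:ℝ) := k.cast_nonneg
    have : 2 * (1/((k:ℝ)+1)^2) * (x*((k:ℝ)+2)*((k:ℝ)+3)) = 2*x*((k:ℝ)+2)*((k:ℝ)+3)/((k:ℝ)+1)^2 := by
      field_simp
    rw [this, le_div_iff₀ (by positivity)]
    nlinarith
  have htail : ∑' k, g x (k+1) ≤ ∑' k : ℕ, 6/(x*((k:ℝ)+2)*((k:ℝ)+3)) := by
    apply Summable.tsum_le_tsum hb ((summable_nat_add_iff 1).2 hsg) hsb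
  have hval : ∑' k : ℕ, 6/(x*((k:ℝ)+2)*((k:ℝ)+3)) = 3/x := by
    have hfun : (fun k : ℕ => 6/(x*((k:ℝ)+2)) - 6/(x*(((k+1:ℕ)):ℝ)+x*2)) =
        (fun k : ℕ => 6/(x*((k:ℝ)+2)*((k:ℝ)+3))) := by
      funext k
      push_cast
      field_simp
      ring
    have hv : Filter.Tendsto (fun k : ℕ => 6/(x*((k:ℝ)+2))) atTop (nhds 0) := by
      apply Filter.Tendsto.div_atTop tendsto_const_nhds
      apply Filter.Tendsto.const_mul_atTop hx0
      exact Filter.Tendsto.atTop_add tendsto_natCast_atTop_atTop tendsto_const_nhds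
    have hv' : Filter.Tendsto (fun k : ℕ => 6/(x*((k:ℝ))+x*2)) atTop (nhds 0) := by
      apply hv.congr
      intro k
      ring_nf
    have hts := hasSum_telescope (v := fun k : ℕ => 6/(x*((k:ℝ))+x*2)) hv' ?_
    · have hfun2 : (fun k : ℕ => 6/(x*((k:ℝ))+x*2) - 6/(x*(((k+1:ℕ)):ℝ)+x*2)) =
          (fun k : ℕ => 6/(x*((k:ℝ)+2)*((k:ℝ)+3))) := by
        funext k
        push_cast
        field_simp
        ring
      rw [hfun2] at hts
      have h0 : 6/(x*(((0:ℕ)):ℝ)+x*2) = 3/x := by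
        norm_num
        rw [show x*2 = 2*x by ring]
        rw [div_mul_eq_div_div]
        norm_num
      rw [hts.tsum_eq]
      simpa using h0
    · have hfun2 : (fun k : ℕ => 6/(x*((k:ℝ))+x*2) - 6/(x*(((k+1:ℕ)):ℝ)+x*2)) =
          (fun k : ℕ => 6/(x*((k:ℝ)+2)*((k:ℝ)+3))) := by
        funext k
        push_cast
        field_simp
        ring
      rw [hfun2]
      exact hsb
  linarith
/-- the one-step ratio -/
def q (x : ℝ) : ℝ := (x-1/2)^2/(x*(x-1))

lemma G_iterate {c : ℝ} (hc : 3/2 ≤ c) (m : ℕ) :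
    ∑' k, g c k = (∏ j ∈ Finset.range m, q (c+j)) * ∑' k, g (c+m) k := by
  induction m with
  | zero => simp
  | succ m ih =>
      rw [Finset.prod_range_succ, ih]
      have hcm : (3:ℝ)/2 ≤ c + m := by
        have : (0:ℝ) ≤ (m:ℝ) := m.cast_nonneg
        linarith
      have hstep := G_step hcm
      have hcast : c + ((m:ℝ)+1) = (c+m)+1 := by push_cast; ring
      rw [show ((m+1:ℕ):ℝ) = (m:ℝ)+1 by push_cast; ring, hcast, hstep, q]
      ring

lemma G_tendsto {c : ℝ} (hc : 3/2 ≤ c) :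
    Filter.Tendsto (fun m : ℕ => ∑' k, g (c+m) k) atTop (nhds 1) := by
  have hupper : Filter.Tendsto (fun m : ℕ => 1 + 3/(c+(m:ℝ))) atTop (nhds 1) := by
    have h : Filter.Tendsto (fun m : ℕ => 3/(c+(m:ℝ))) atTop (nhds 0) := by
      apply Filter.Tendsto.div_atTop tendsto_const_nhds
      exact Filter.tendsto_atTop_add_const_left _ _ tendsto_natCast_atTop_atTop
    have h2 := Filter.Tendsto.add
      (tendsto_const_nhds : Filter.Tendsto (fun _ : ℕ => (1:ℝ)) atTop (nhds 1)) h
    simpa using h2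
  apply tendsto_of_tendsto_of_tendsto_of_le_of_le' tendsto_const_nhds hupper
  · filter_upwards with m
    exact one_le_G (by have : (0:ℝ) ≤ (m:ℝ) := m.cast_nonneg; linarith)
  · filter_upwards [Filter.eventually_ge_atTop 2] with m hm
    apply G_le
    have : (2:ℝ) ≤ (m:ℝ) := by exact_mod_cast hm
    linarith

lemma prod_tendsto {c : ℝ} (hc : 3/2 ≤ c) :
    Filter.Tendsto (fun m : ℕ => ∏ j ∈ Finset.range m, q (c+j)) atTop (nhds (∑' k, g c k)) := by
  have h1 : ∀ m : ℕ, ∏ j ∈ Finset.range m, q (c+j) = (∑' k, g c k) / ∑' k, g (c+m) k := by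
    intro m
    have hGm : (1:ℝ) ≤ ∑' k, g (c+m) k :=
      one_le_G (by have : (0:ℝ) ≤ (m:ℝ) := m.cast_nonneg; linarith)
    rw [G_iterate hc m, mul_div_assoc, div_self (by linarith), mul_one]
  simp_rw [h1]
  have h2 := Filter.Tendsto.div
    (tendsto_const_nhds : Filter.Tendsto (fun _ : ℕ => (∑' k, g c k)) atTop (nhds (∑' k, g c k)))
    (G_tendsto hc) (one_ne_zero)
  simpa [Pi.div_def] using h2

/-- Wallis partial products match q -/
lemma wallis_factor (i : ℕ) :
    (2*(i:ℝ)+2)/(2*(i:ℝ)+1) * ((2*(i:ℝ)+2)/(2*(i:ℝ)+3)) = q ((i:ℝ)+3/2) := by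
  have e : ((i:ℝ)+3/2)*((i:ℝ)+3/2-1) = ((i:ℝ)+3/2)*((i:ℝ)+1/2) := by ring
  rw [q, e, div_mul_div_comm, div_eq_div_iff (by positivity) (by positivity)]
  ring

lemma wallis_id (n : ℕ) : Real.Wallis.W n * (2*n+1) * wb n ^ 2 = 1 := by
  induction n with
  | zero => simp [Real.Wallis.W, wb_zero]
  | succ n ih =>
      rw [Real.Wallis.W_succ, wb_succ]
      have h1 : (2*(n:ℝ)+1) ≠ 0 := by positivity
      have h2 : (2*(n:ℝ)+2) ≠ 0 := by positivity
      have h3 : (2*(n:ℝ)+3) ≠ 0 := by positivity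
      have key : Real.Wallis.W n * ((2*(n:ℝ)+2)/(2*n+1)*((2*n+2)/(2*n+3))) * (2*((n:ℕ)+1:ℝ)+1)
          * (wb n * ((2*(n:ℝ)+1)/(2*n+2)))^2
          = Real.Wallis.W n * (2*n+1) * wb n ^2 := by
        push_cast
        field_simp
        ring
      push_cast
      push_cast at key
      rw [key, ih]

/-- the main sum evaluation -/
lemma G_value (n : ℕ) : ∑' k, g ((n:ℝ)+3/2) k = (π/2) / Real.Wallis.W n := by
  have hc : (3:ℝ)/2 ≤ (n:ℝ)+3/2 := by
    have : (0:ℝ) ≤ (n:ℝ) := n.cast_nonneg; linarith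
  have hW := Real.Wallis.tendsto_W_nhds_pi_div_two
  have hWn : Filter.Tendsto (fun m : ℕ => Real.Wallis.W (n+m)) atTop (nhds (π/2)) := by
    have := hW.comp (Filter.tendsto_add_atTop_nat n)
    apply this.congr
    intro m
    simp [Nat.add_comm]
  have hprod : ∀ m : ℕ, ∏ j ∈ Finset.range m, q ((n:ℝ)+3/2+j)
      = Real.Wallis.W (n+m) / Real.Wallis.W n := by
    intro m
    rw [Real.Wallis.W, Real.Wallis.W, Finset.prod_range_add]
    rw [mul_comm, mul_div_assoc, div_self, mul_one]
    · apply Finset.prod_congr rfl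
      intro j _
      have h := wallis_factor (n+j)
      push_cast at h ⊢
      rw [show (n:ℝ)+3/2+(j:ℝ) = (n:ℝ)+(j:ℝ)+3/2 by ring]
      exact h.symm
    · exact (Finset.prod_pos (fun i _ => by positivity)).ne'
  have h2 : Filter.Tendsto (fun m : ℕ => ∏ j ∈ Finset.range m, q ((n:ℝ)+3/2+j)) atTop
      (nhds ((π/2) / Real.Wallis.W n)) := by
    simp_rw [hprod]
    exact hWn.div tendsto_const_nhds (Real.Wallis.W_pos n).ne'
  exact tendsto_nhds_unique (prod_tendsto hc) h2

lemma partial_fractions (k : ℕ) : ∀ x : ℝ, 0 < x →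
    ∑ j ∈ Finset.range (k+1), ((Nat.choose k j : ℕ) : ℝ) * (-1)^j / (x+j)
      = (Nat.factorial k : ℝ) / ph x (k+1) := by
  induction k with
  | zero => intro x hx; simp [ph_succ, ph_zero]
  | succ k ih =>
    intro x hx
    have hx1 : (0:ℝ) < x+1 := by linarith
    have key : ∑ j ∈ Finset.range (k+2), ((Nat.choose (k+1) j : ℕ) : ℝ) * (-1)^j / (x+j)
        = ∑ j ∈ Finset.range (k+1), ((Nat.choose k j : ℕ) : ℝ) * (-1)^j / (x+j)
          - ∑ j ∈ Finset.range (k+1), ((Nat.choose k j : ℕ) : ℝ) * (-1)^j / ((x+1)+j) := by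
      rw [Finset.sum_range_succ' (fun j => ((Nat.choose (k+1) j : ℕ) : ℝ) * (-1)^j / (x+j)) (k+1)]
      have hsplit : ∀ i ∈ Finset.range (k+1),
          ((Nat.choose (k+1) (i+1) : ℕ) : ℝ) * (-1)^(i+1) / (x+(i+1:ℕ))
          = ((Nat.choose k (i+1) : ℕ) : ℝ) * (-1)^(i+1) / (x+(i+1:ℕ))
            - ((Nat.choose k i : ℕ) : ℝ) * (-1)^i / ((x+1)+i) := by
        intro i _
        rw [Nat.choose_succ_succ]
        have h2 : x + ((i:ℝ)+1) ≠ 0 := by positivity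
        push_cast
        rw [show x + 1 + (i:ℝ) = x + ((i:ℝ)+1) by ring]
        field_simp
        ring
      rw [Finset.sum_congr rfl hsplit, Finset.sum_sub_distrib]
      have e2 : ∑ i ∈ Finset.range (k+1), ((Nat.choose k (i+1) : ℕ) : ℝ) * (-1)^(i+1) / (x+(i+1:ℕ))
          = ∑ j ∈ Finset.range (k+1), ((Nat.choose k j : ℕ) : ℝ) * (-1)^j / (x+j)
            - ((Nat.choose k 0 : ℕ) : ℝ) * (-1)^0 / (x+(0:ℕ)) := by
        have e3 := Finset.sum_range_succ' (fun j => ((Nat.choose k j : ℕ) : ℝ) * (-1)^j / (x+j)) (k+1)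
        have e4 := Finset.sum_range_succ (fun j => ((Nat.choose k j : ℕ) : ℝ) * (-1)^j / (x+j)) (k+1)
        rw [Nat.choose_succ_self] at e4
        simp only [Nat.cast_zero, zero_mul, zero_div, add_zero] at e4
        rw [← e4, e3]
        ring
      rw [e2]
      simp only [Nat.choose_zero_right]
      push_cast
      ring
    rw [key, ih x hx, ih (x+1) hx1]
    have hpx := ph_pos hx1 k
    have h1 : ph x (k+2) = x * (ph (x+1) k * ((x+1)+k)) := by
      rw [ph_succ_left, ph_succ]
    have h2 : ph x (k+1) = x * ph (x+1) k := ph_succ_left x k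
    have h3 : ph (x+1) (k+1) = ph (x+1) k * ((x+1)+k) := ph_succ (x+1) k
    rw [h1, h2, h3, Nat.factorial_succ]
    have h4 : ((x:ℝ)+1+k) ≠ 0 := by positivity
    push_cast
    field_simp
    ring

lemma beta_integral {s : ℝ} (hs : -1 < s) (hs' : ∀ j : ℕ, s + j ≠ 0) (k : ℕ) :
    ∫ u in (0:ℝ)..1, u ^ s * (1-u)^k
      = (Nat.factorial k : ℝ) / ph (s+1) (k+1) := by
  have heq : Set.EqOn (fun u : ℝ => u ^ s * (1-u)^k)
      (fun u : ℝ => ∑ j ∈ Finset.range (k+1), ((Nat.choose k j : ℕ):ℝ) * (-1)^j * u^(s+j))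
      (Set.uIcc 0 1) := by
    intro u hu
    rcases eq_or_ne u 0 with rfl | hu0
    · simp only
      rw [Real.zero_rpow (by simpa using hs' 0), zero_mul]
      symm
      apply Finset.sum_eq_zero
      intro j _
      rw [Real.zero_rpow (hs' j), mul_zero]
    · have hupos : 0 < u := by
        rcases Set.mem_uIcc.1 hu with h | h
        · exact lt_of_le_of_ne h.1 (Ne.symm hu0)
        · exfalso; linarith [h.1, h.2]
      simp only
      have hbin : (1-u)^k = ∑ j ∈ Finset.range (k+1), (-u)^j * 1^(k-j) * (Nat.choose k j : ℝ) := by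
        rw [show (1:ℝ)-u = -u + 1 by ring, add_pow]
      rw [hbin, Finset.mul_sum]
      apply Finset.sum_congr rfl
      intro j _
      rw [Real.rpow_add hupos, Real.rpow_natCast]
      have h5 : (-u)^j = (-1)^j * u^j := by rw [neg_pow]
      rw [h5]
      ring
  rw [intervalIntegral.integral_congr heq,
    intervalIntegral.integral_finset_sum (fun j _ => by
      apply IntervalIntegrable.const_mul
      exact intervalIntegrable_rpow' (by
        have : (0:ℝ) ≤ (j:ℝ) := j.cast_nonneg
        linarith))]
  have hterm : ∀ j ∈ Finset.range (k+1),
      ∫ u in (0:ℝ)..1, ((Nat.choose k j : ℕ):ℝ) * (-1)^j * u^(s+j)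
        = ((Nat.choose k j : ℕ):ℝ) * (-1)^j / ((s+1)+j) := by
    intro j _
    rw [intervalIntegral.integral_const_mul]
    have hj : (0:ℝ) ≤ (j:ℝ) := j.cast_nonneg
    rw [integral_rpow (Or.inl (by linarith))]
    rw [Real.one_rpow, Real.zero_rpow (ne_of_gt (by linarith : (0:ℝ) < s+(j:ℝ)+1))]
    rw [show s + (j:ℝ) + 1 = (s+1)+j by ring]
    ring
  rw [Finset.sum_congr rfl hterm]
  exact partial_fractions k (s+1) (by linarith)

lemma twoF1half_eq (z : ℝ) :
    (∑' k : ℕ, (Real.Gamma (1 / 2 + k) / Real.Gamma (1 / 2)) ^ 2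
      / (Nat.factorial k : ℝ) ^ 2 * z ^ k) = ∑' k : ℕ, wb k ^2 * z^k := by
  congr 1
  funext k
  rw [gamma_half_ratio k]
  have hG : Real.Gamma (1/2) ≠ 0 := (Real.Gamma_pos_of_pos (by norm_num)).ne'
  have hf : (Nat.factorial k : ℝ) ≠ 0 := by exact_mod_cast (Nat.factorial_pos k).ne'
  rw [mul_div_assoc, div_self hG, mul_one, ph_half]
  field_simp

theorem main_thm (n : ℕ) :
    (1 / π) * ∫ u in (0:ℝ)..1, u ^ ((n : ℝ) - 1 / 2) *
      (∑' k : ℕ, (Real.Gamma (1 / 2 + k) / Real.Gamma (1 / 2)) ^ 2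
        / (Nat.factorial k : ℝ) ^ 2 * (1-u) ^ k)
      = (Nat.choose (2 * n) n : ℝ) ^ 2 / 4 ^ (2 * n) := by
  set s : ℝ := (n:ℝ) - 1/2 with hsdef
  have hs : (-1:ℝ) < s := by
    have : (0:ℝ) ≤ (n:ℝ) := n.cast_nonneg
    rw [hsdef]; linarith
  have hs' : ∀ j : ℕ, s + (j:ℝ) ≠ 0 := by
    intro j h
    have h2 : ((2*(n+j) : ℕ) : ℝ) = 1 := by push_cast; rw [hsdef] at h; linarith
    have h3 : 2*(n+j) = 1 := by exact_mod_cast h2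
    omega
  have hr : s + 1 = (n:ℝ) + 1/2 := by rw [hsdef]; ring
  have hrpos : (0:ℝ) < s + 1 := by linarith
  have hc32 : (3:ℝ)/2 ≤ (n:ℝ) + 3/2 := by
    have : (0:ℝ) ≤ (n:ℝ) := n.cast_nonneg; linarith
  -- step 1: rewrite integrand as a tsum
  have hintegrand : (fun u : ℝ => u ^ s *
      (∑' k : ℕ, (Real.Gamma (1 / 2 + k) / Real.Gamma (1 / 2)) ^ 2
        / (Nat.factorial k : ℝ) ^ 2 * (1-u) ^ k))
      = fun u : ℝ => ∑' k : ℕ, wb k ^2 * (u ^ s * (1-u)^k) := by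
    funext u
    rw [twoF1half_eq (1-u), ← tsum_mul_left]
    congr 1
    funext k
    ring
  rw [hintegrand]
  -- step 2: interchange integral and sum
  have hcont : ContinuousOn (fun u : ℝ => u ^ s) (Set.Ioc (0:ℝ) 1) :=
    continuousOn_id.rpow_const (fun x hx => Or.inl (ne_of_gt hx.1))
  have hcont2 : ∀ k : ℕ, ContinuousOn (fun u : ℝ => u ^ s * (1-u)^k) (Set.Ioc (0:ℝ) 1) := by
    intro k
    exact hcont.mul (Continuous.continuousOn (by continuity))
  have hbase : IntegrableOn (fun u : ℝ => u ^ s) (Set.Ioc (0:ℝ) 1) volume := by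
    have h := intervalIntegrable_rpow' (a := 0) (b := 1) hs
    rwa [intervalIntegrable_iff, Set.uIoc_of_le zero_le_one] at h
  have hint : ∀ k : ℕ, IntegrableOn (fun u : ℝ => wb k ^2 * (u ^ s * (1-u)^k))
      (Set.Ioc (0:ℝ) 1) volume := by
    intro k
    apply Integrable.const_mul
    apply Integrable.mono hbase
    · exact ContinuousOn.aestronglyMeasurable (hcont2 k) measurableSet_Ioc
    · rw [ae_restrict_iff' measurableSet_Ioc]
      filter_upwards with u hu
      have h0 : 0 < u := hu.1
      have h1 : u ≤ 1 := hu.2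
      have hb1 : ‖(1-u)^k‖ ≤ 1 := by
        rw [norm_pow]
        apply pow_le_one₀ (norm_nonneg _)
        rw [Real.norm_eq_abs, abs_le]
        constructor <;> linarith
      rw [norm_mul]
      nth_rewrite 2 [← mul_one (‖u ^ s‖)]
      exact mul_le_mul_of_nonneg_left hb1 (norm_nonneg _)
  have hval : ∀ k : ℕ, ∫ u in Set.Ioc (0:ℝ) 1, wb k ^2 * (u ^ s * (1-u)^k)
      = wb k ^2 * ((Nat.factorial k : ℝ) / ph (s+1) (k+1)) := by
    intro k
    rw [← intervalIntegral.integral_of_le zero_le_one, intervalIntegral.integral_const_mul,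
      beta_integral hs hs' k]
  have hnorm : ∀ k : ℕ, ∫ u in Set.Ioc (0:ℝ) 1, ‖wb k ^2 * (u ^ s * (1-u)^k)‖
      = wb k ^2 * ((Nat.factorial k : ℝ) / ph (s+1) (k+1)) := by
    intro k
    rw [← hval k]
    apply MeasureTheory.integral_congr_ae
    rw [Filter.EventuallyEq, ae_restrict_iff' measurableSet_Ioc]
    filter_upwards with u hu
    have h0 : 0 < u := hu.1
    have h1 : u ≤ 1 := hu.2
    rw [norm_mul, norm_mul]
    rw [Real.norm_rpow_of_nonneg h0.le]
    rw [Real.norm_eq_abs (wb k ^2), abs_of_nonneg (sq_nonneg _), Real.norm_eq_abs u,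
      abs_of_pos h0, Real.norm_eq_abs ((1-u)^k), abs_of_nonneg (pow_nonneg (by linarith : (0:ℝ) ≤ 1-u) k)]
  -- the sequence of integrals coincides with g ((n:ℝ)+3/2) / (n+1/2)
  have hteq : ∀ k : ℕ, wb k ^2 * ((Nat.factorial k : ℝ) / ph (s+1) (k+1))
      = g ((n:ℝ)+3/2) k / ((n:ℝ)+1/2) := by
    intro k
    rw [ph_succ_left, hr, g]
    have hph := ph_pos (show (0:ℝ) < (n:ℝ)+3/2 by linarith) k
    have : (n:ℝ)+1/2+1 = (n:ℝ)+3/2 := by ring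
    rw [this]
    field_simp
  have hsummable : Summable (fun k : ℕ => wb k ^2 * ((Nat.factorial k : ℝ) / ph (s+1) (k+1))) := by
    apply Summable.congr ((summable_g hc32).div_const ((n:ℝ)+1/2))
    intro k
    rw [hteq k]
  have hinterchange := MeasureTheory.integral_tsum_of_summable_integral_norm
      (F := fun (k : ℕ) (u : ℝ) => wb k ^2 * (u ^ s * (1-u)^k))
      (μ := volume.restrict (Set.Ioc (0:ℝ) 1)) hint
      (by
        apply Summable.congr hsummable
        intro k
        rw [← hnorm k])
  rw [intervalIntegral.integral_of_le zero_le_one, ← hinterchange]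
  -- step 3: evaluate the sum
  have hsum_eval : ∑' k : ℕ, ∫ u in Set.Ioc (0:ℝ) 1, wb k ^2 * (u ^ s * (1-u)^k)
      = (∑' k, g ((n:ℝ)+3/2) k) / ((n:ℝ)+1/2) := by
    rw [← tsum_div_const]
    congr 1
    funext k
    rw [hval k, hteq k]
  rw [hsum_eval, G_value n]
  -- step 4: final algebra with wallis_id
  have hW := wallis_id n
  have hWpos := Real.Wallis.W_pos n
  have hpi := Real.pi_pos
  have hwbn : wb n ^ 2 = (Nat.choose (2*n) n : ℝ)^2 / 4^(2*n) := by
    rw [wb, Nat.centralBinom]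
    rw [div_pow, ← pow_mul]
    ring_nf
  rw [← hwbn]
  have hn2 : (0:ℝ) < (n:ℝ)+1/2 := by linarith
  field_simp
  nlinarith [hW, hWpos, hpi]

end

theorem stmt18 (n : ℕ) :
    (1 / π) * ∫ u in (0:ℝ)..1, u ^ ((n : ℝ) - 1 / 2) * twoF1half (1 - u)
      = (Nat.choose (2 * n) n : ℝ) ^ 2 / 4 ^ (2 * n) := by
  have h := main_thm n
  simpa only [twoF1half] using h
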